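/- Suppose s is a real polynomial of degree d < N with s(0) = 0 and 1−ε ≤ s(x) ≤ 1 for all integers x in [1, N]. Assume the Coppersmith–Rivlin bound: there exist positive constants a, b such that any polynomial of degree d bounded by 1 in absolute value at all integers in [0, n] with n ≥ δd² is bounded by a·e^{b/δ} on all of [0,n]. Then ε ≥ (1/a)·e^{−b d²/(N−1) − 4d√N/(N−1)}. -/

import Mathlib

open Polynomial Real

private lemma cheb_natDegree_le : ∀ n : ℕ,
    (Polynomial.Chebyshev.T ℝ (n:ℤ)).natDegree ≤ n ∧
    (Polynomial.Chebyshev.T ℝ ((n:ℤ)+1)).natDegree ≤ n+1 := by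
  intro n
  induction n with
  | zero =>
    constructor
    · simp [Polynomial.Chebyshev.T_zero]
    · norm_num [Polynomial.Chebyshev.T_one]
  | succ n ih =>
    have hcast : ((n+1:ℕ):ℤ) = (n:ℤ)+1 := by push_cast; ring
    constructor
    · rw [hcast]; exact ih.2
    · have hcast2 : ((n+1:ℕ):ℤ)+1 = (n:ℤ)+2 := by push_cast; ring
      rw [hcast2, Polynomial.Chebyshev.T_add_two]
      refine le_trans (natDegree_sub_le _ _) (sup_le ?_ ?_)
      · refine le_trans (natDegree_mul_le) ?_
        have h2 : (2 * X : ℝ[X]).natDegree ≤ 1 := le_trans natDegree_mul_le (by simp)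
        have := ih.2
        omega
      · exact le_trans ih.1 (by omega)

private lemma cheb_eval_pair (y : ℝ) (hy : 0 < y) : ∀ n : ℕ,
    (Polynomial.Chebyshev.T ℝ (n:ℤ)).eval ((y + y⁻¹)/2) = (y^n + y⁻¹^n)/2 ∧
    (Polynomial.Chebyshev.T ℝ ((n:ℤ)+1)).eval ((y + y⁻¹)/2) = (y^(n+1) + y⁻¹^(n+1))/2 := by
  have hy0 : y ≠ 0 := ne_of_gt hy
  intro n
  induction n with
  | zero =>
    constructor
    · simp [Polynomial.Chebyshev.T_zero]
    · norm_num [Polynomial.Chebyshev.T_one]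
  | succ n ih =>
    have hcast : ((n+1:ℕ):ℤ) = (n:ℤ)+1 := by push_cast; ring
    constructor
    · rw [hcast]; exact ih.2
    · have hcast2 : ((n+1:ℕ):ℤ)+1 = (n:ℤ)+2 := by push_cast; ring
      rw [hcast2, Polynomial.Chebyshev.T_add_two]
      simp only [eval_sub, eval_mul, eval_ofNat, eval_X, ih.1, ih.2]
      field_simp
      have hyy : y * y⁻¹ = 1 := mul_inv_cancel₀ hy0
      linear_combination (y⁻¹^n * (y - y⁻¹)) * hyy


set_option maxHeartbeats 2000000 in
theorem quantum_search_error_lower_bound (N d : ℕ) (hN : 2 ≤ N) (hd : 1 ≤ d) (hdN : d < N)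
    (ε : ℝ) (hε : 0 < ε) (s : Polynomial ℝ)
    (hdeg : s.degree ≤ d)
    (hs0 : s.eval 0 = 0)
    (hs : ∀ x : ℕ, 1 ≤ x → x ≤ N → 1 - ε ≤ s.eval (x : ℝ) ∧ s.eval (x : ℝ) ≤ 1)
    (a b : ℝ) (ha : 0 < a) (hb : 0 < b)
    (hCR : ∀ (p : Polynomial ℝ) (n : ℕ) (δ : ℝ), 0 < δ →
      δ * (p.natDegree : ℝ) ^ 2 ≤ n →
      (∀ k : ℕ, k ≤ n → |p.eval (k : ℝ)| ≤ 1) →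
      ∀ x : ℝ, 0 ≤ x → x ≤ n → |p.eval x| < a * Real.exp (b / δ)) :
    ε ≥ (1 / a) * Real.exp (-(b * d ^ 2 / (N - 1)) - 4 * d * Real.sqrt N / (N - 1)) := by
  set m : ℝ := (N : ℝ) - 1 with hm_def
  have hm1 : (1:ℝ) ≤ m := by
    have : (2:ℝ) ≤ (N:ℝ) := by exact_mod_cast hN
    simp [hm_def]; linarith
  have hm0 : (0:ℝ) < m := by linarith
  have hmne : m ≠ 0 := ne_of_gt hm0
  have hd0 : (0:ℝ) < (d:ℝ) := by exact_mod_cast hd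
  have hdne : (d:ℝ) ≠ 0 := ne_of_gt hd0
  -- the polynomial q
  set q : ℝ[X] := Polynomial.C ε⁻¹ * (Polynomial.C 1 - s.comp (Polynomial.X + Polynomial.C 1)) with hq_def
  have hqeval : ∀ x : ℝ, q.eval x = ε⁻¹ * (1 - s.eval (x+1)) := by
    intro x
    simp [hq_def, eval_comp]
  have hsnd : s.natDegree ≤ d := natDegree_le_of_degree_le hdeg
  have hqdeg : q.natDegree ≤ d := by
    refine le_trans (natDegree_mul_le) ?_
    simp only [natDegree_C, zero_add]
    refine le_trans (natDegree_sub_le _ _) (sup_le (by simp) ?_)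
    refine le_trans (natDegree_comp_le) ?_
    have : (Polynomial.X + Polynomial.C (1:ℝ)).natDegree = 1 := natDegree_X_add_C 1
    rw [this, mul_one]
    exact hsnd
  -- q is bounded by 1 at integers 0..N-1
  have hqint : ∀ k : ℕ, k ≤ N - 1 → |q.eval (k:ℝ)| ≤ 1 := by
    intro k hk
    have h1 : 1 ≤ k + 1 := by omega
    have h2 : k + 1 ≤ N := by omega
    obtain ⟨hl, hu⟩ := hs (k+1) h1 h2
    rw [hqeval]
    have hcast : ((k+1:ℕ):ℝ) = (k:ℝ) + 1 := by push_cast; ring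
    rw [hcast] at hl hu
    rw [abs_le]
    constructor
    · have : (0:ℝ) ≤ ε⁻¹ * (1 - s.eval ((k:ℝ)+1)) := by
        apply mul_nonneg (le_of_lt (inv_pos.mpr hε)); linarith
      linarith
    · have h3 : 1 - s.eval ((k:ℝ)+1) ≤ ε := by linarith
      calc ε⁻¹ * (1 - s.eval ((k:ℝ)+1)) ≤ ε⁻¹ * ε := by
              apply mul_le_mul_of_nonneg_left h3 (le_of_lt (inv_pos.mpr hε))
        _ = 1 := inv_mul_cancel₀ (ne_of_gt hε)
  -- apply hCR
  set A : ℝ := a * Real.exp (b * d^2 / m) with hA_def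
  have hA : ∀ x : ℝ, 0 ≤ x → x ≤ m → |q.eval x| < A := by
    have hcastN : ((N - 1 : ℕ) : ℝ) = m := by
      have : 1 ≤ N := by omega
      push_cast [this]; simp [hm_def]
    have hδ : (0:ℝ) < m / (d:ℝ)^2 := by positivity
    have happ := hCR q (N-1) (m / (d:ℝ)^2) hδ ?_ hqint
    · intro x hx0 hxm
      have := happ x hx0 (by rw [hcastN]; exact hxm)
      have hexp : b / (m / (d:ℝ)^2) = b * d^2 / m := by
        field_simp
      rwa [hexp] at this
    · rw [hcastN]
      calc m / (d:ℝ)^2 * (q.natDegree : ℝ)^2 ≤ m / (d:ℝ)^2 * (d:ℝ)^2 := by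
            apply mul_le_mul_of_nonneg_left _ (le_of_lt hδ)
            have : (q.natDegree : ℝ) ≤ (d:ℝ) := by exact_mod_cast hqdeg
            have h0 : (0:ℝ) ≤ (q.natDegree:ℝ) := by positivity
            nlinarith
        _ = m := by field_simp
  have hApos : 0 < A := by positivity
  -- Chebyshev nodes
  set t : Fin (d+1) → ℝ := fun k => m/2 * (1 - Real.cos ((k:ℕ) * π / d)) with ht_def
  have htmono : StrictMono t := by
    refine Fin.strictMono_iff_lt_succ.mpr ?_
    intro i
    have hc1 : ((i.castSucc : Fin (d+1)) : ℕ) = (i:ℕ) := rfl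
    have hc2 : ((i.succ : Fin (d+1)) : ℕ) = (i:ℕ) + 1 := rfl
    simp only [ht_def, hc1, hc2]
    have hilt : (i:ℕ) + 1 ≤ d := i.2
    have hiltR : ((i:ℕ):ℝ) + 1 ≤ (d:ℝ) := by exact_mod_cast hilt
    have hcos : Real.cos ((((i:ℕ):ℝ)+1) * π / d) < Real.cos (((i:ℕ):ℝ) * π / d) := by
      apply Real.strictAntiOn_cos
      · constructor
        · positivity
        · rw [div_le_iff₀ hd0]
          have : ((i:ℕ):ℝ) ≤ (d:ℝ) := by linarith
          nlinarith [Real.pi_pos]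
      · constructor
        · positivity
        · rw [div_le_iff₀ hd0]
          nlinarith [Real.pi_pos]
      · rw [div_lt_div_iff₀ hd0 hd0]
        nlinarith [Real.pi_pos]
    push_cast
    nlinarith [hcos]
  have htrange : ∀ k : Fin (d+1), 0 ≤ t k ∧ t k ≤ m := by
    intro k
    have h1 : Real.cos ((k:ℕ) * π / d) ≤ 1 := Real.cos_le_one _
    have h2 : -1 ≤ Real.cos ((k:ℕ) * π / d) := Real.neg_one_le_cos _
    constructor
    · simp only [ht_def]
      apply mul_nonneg (by linarith) (by linarith)
    · simp only [ht_def]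
      calc m/2 * (1 - Real.cos ((k:ℕ) * π / d)) ≤ m/2 * 2 :=
            mul_le_mul_of_nonneg_left (by linarith) (by linarith)
        _ = m := by ring
  have ht0 : t 0 = 0 := by
    have hc : ((0 : Fin (d+1)) : ℕ) = 0 := rfl
    simp only [ht_def, hc, Nat.cast_zero, zero_mul, zero_div, Real.cos_zero]
    ring
  -- the comparison polynomial
  set g : ℝ[X] := Polynomial.C 1 - Polynomial.C (2/m) * Polynomial.X with hg_def
  set Tc : ℝ[X] := (Polynomial.Chebyshev.T ℝ (d:ℤ)).comp g with hTc_def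
  have hTc_node : ∀ k : Fin (d+1), Tc.eval (t k) = (-1)^(k:ℕ) := by
    intro k
    have hgev : g.eval (t k) = Real.cos ((k:ℕ) * π / d) := by
      simp only [hg_def, ht_def, eval_sub, eval_mul, eval_C, eval_X]
      field_simp
      ring
    rw [hTc_def, eval_comp, hgev]
    rw [Polynomial.Chebyshev.T_real_cos]
    have harg : ((d:ℤ):ℝ) * (((k:ℕ):ℝ) * π / d) = ((k:ℕ):ℝ) * π := by
      push_cast
      field_simp
    rw [harg]
    have := Real.cos_add_nat_mul_pi 0 (k:ℕ)
    simpa using this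
  set x0 : ℝ := 1 + 2/m with hx0_def
  have hTc_neg : Tc.eval (-1) = (Polynomial.Chebyshev.T ℝ (d:ℤ)).eval x0 := by
    rw [hTc_def, eval_comp]
    congr 1
    simp only [hg_def, eval_sub, eval_mul, eval_C, eval_X, hx0_def]
    ring
  have hTc_deg : Tc.natDegree ≤ d := by
    refine le_trans (natDegree_comp_le) ?_
    have h1 : (Polynomial.Chebyshev.T ℝ (d:ℤ)).natDegree ≤ d := (cheb_natDegree_le d).1
    have h2 : g.natDegree ≤ 1 := by
      refine le_trans (natDegree_sub_le _ _) (sup_le (by simp) ?_)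
      refine le_trans (natDegree_mul_le) (by simp)
    calc (Polynomial.Chebyshev.T ℝ (d:ℤ)).natDegree * g.natDegree ≤ d * 1 :=
          Nat.mul_le_mul h1 h2
      _ = d := by omega
  -- the difference polynomial
  set R : ℝ[X] := Polynomial.C A * Tc - q with hR_def
  have hRdeg : R.natDegree ≤ d := by
    refine le_trans (natDegree_sub_le _ _) (sup_le ?_ hqdeg)
    refine le_trans (natDegree_mul_le) ?_
    simpa using hTc_deg
  have hRnode : ∀ k : Fin (d+1), R.eval (t k) = A * (-1)^(k:ℕ) - q.eval (t k) := by
    intro k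
    simp [hR_def, hTc_node k]
  have hRpos : ∀ k : Fin (d+1), Even (k:ℕ) → 0 < R.eval (t k) := by
    intro k hk
    obtain ⟨h0, h1⟩ := htrange k
    have := hA (t k) h0 h1
    rw [abs_lt] at this
    rw [hRnode k, hk.neg_one_pow]
    linarith [this.2]
  have hRneg : ∀ k : Fin (d+1), Odd (k:ℕ) → R.eval (t k) < 0 := by
    intro k hk
    obtain ⟨h0, h1⟩ := htrange k
    have := hA (t k) h0 h1
    rw [abs_lt] at this
    rw [hRnode k, hk.neg_one_pow]
    linarith [this.1]
  -- key comparison at -1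
  have hkey : q.eval (-1) < A * (Polynomial.Chebyshev.T ℝ (d:ℤ)).eval x0 := by
    by_contra hcon
    push_neg at hcon
    have hRneg1 : R.eval (-1) ≤ 0 := by
      rw [hR_def]
      simp only [eval_sub, eval_mul, eval_C]
      rw [hTc_neg]
      linarith
    have hcont : ∀ u v : ℝ, ContinuousOn (fun x => R.eval x) (Set.Icc u v) :=
      fun u v => R.continuous.continuousOn
    -- for each node index there is a root below it and above all earlier nodes
    have hroot : ∀ k : Fin (d+1), ∃ z : ℝ, R.eval z = 0 ∧ z < t k ∧
        ∀ j : Fin (d+1), j < k → t j < z := by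
      intro k
      rcases Fin.eq_zero_or_eq_succ k with rfl | ⟨j, rfl⟩
      · have hpos0 : 0 < R.eval (t 0) := hRpos 0 (by simp)
        have hle : (-1:ℝ) ≤ t 0 := by rw [ht0]; norm_num
        have hmem : (0:ℝ) ∈ Set.Ico (R.eval (-1)) (R.eval (t 0)) := ⟨hRneg1, hpos0⟩
        obtain ⟨z, hz1, hz2⟩ := intermediate_value_Ico hle (hcont _ _) hmem
        exact ⟨z, hz2, hz1.2, fun j hj => absurd hj (by simp)⟩
      · have hle : t j.castSucc ≤ t j.succ := le_of_lt (htmono (j.castSucc_lt_succ))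
        have hparity : ((j.succ : Fin (d+1)) : ℕ) = ((j.castSucc : Fin (d+1)) : ℕ) + 1 := rfl
        rcases Nat.even_or_odd ((j.castSucc : Fin (d+1)) : ℕ) with he | ho
        · have h1 : 0 < R.eval (t j.castSucc) := hRpos _ he
          have h2 : R.eval (t j.succ) < 0 := hRneg _ (by rw [hparity]; exact he.add_one)
          have hmem : (0:ℝ) ∈ Set.Ioo (R.eval (t j.succ)) (R.eval (t j.castSucc)) := ⟨h2, h1⟩
          obtain ⟨z, hz1, hz2⟩ := intermediate_value_Ioo' hle (hcont _ _) hmem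
          refine ⟨z, hz2, hz1.2, ?_⟩
          intro i hi
          have hile : i ≤ j.castSucc := by
            rw [Fin.le_def]; rw [Fin.lt_def] at hi; simp at hi ⊢; omega
          exact lt_of_le_of_lt (htmono.monotone hile) hz1.1
        · have h1 : R.eval (t j.castSucc) < 0 := hRneg _ ho
          have h2 : 0 < R.eval (t j.succ) := hRpos _ (by rw [hparity]; exact ho.add_one)
          have hmem : (0:ℝ) ∈ Set.Ioo (R.eval (t j.castSucc)) (R.eval (t j.succ)) := ⟨h1, h2⟩
          obtain ⟨z, hz1, hz2⟩ := intermediate_value_Ioo hle (hcont _ _) hmem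
          refine ⟨z, hz2, hz1.2, ?_⟩
          intro i hi
          have hile : i ≤ j.castSucc := by
            rw [Fin.le_def]; rw [Fin.lt_def] at hi; simp at hi ⊢; omega
          exact lt_of_le_of_lt (htmono.monotone hile) hz1.1
    choose w hw1 hw2 hw3 using hroot
    have hwinj : Function.Injective w := by
      intro i j hij
      by_contra hne
      rcases Ne.lt_or_gt hne with hlt | hlt
      · have : w i < w j := lt_trans (hw2 i) (hw3 j i hlt)
        exact absurd hij (ne_of_lt this)
      · have : w j < w i := lt_trans (hw2 j) (hw3 i j hlt)
        exact absurd hij (ne_of_gt this)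
    have hR0 : R = 0 := by
      apply Polynomial.eq_zero_of_natDegree_lt_card_of_eval_eq_zero R hwinj hw1
      exact lt_of_le_of_lt hRdeg (by rw [Fintype.card_fin]; omega)
    have hfalse : 0 < R.eval (t 0) := hRpos 0 (by norm_num)
    rw [hR0, eval_zero] at hfalse
    exact lt_irrefl 0 hfalse
  -- q.eval (-1) = ε⁻¹
  have hqneg1 : q.eval (-1) = ε⁻¹ := by
    rw [hqeval]
    norm_num [hs0]
  -- bound the Chebyshev value
  set u : ℝ := Real.sqrt N with hu_def
  have hu1 : (1:ℝ) ≤ u := by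
    rw [hu_def, show (1:ℝ) = Real.sqrt 1 by simp]
    exact Real.sqrt_le_sqrt (by exact_mod_cast (by omega : 1 ≤ N))
  have hNm : ((N:ℝ)) = m + 1 := by simp [hm_def]
  have hsqm : u^2 = m + 1 := by
    rw [hu_def, Real.sq_sqrt (by positivity)]
    exact hNm
  set y : ℝ := x0 + 2*u/m with hy_def
  have hy1 : (1:ℝ) ≤ y := by
    rw [hy_def, hx0_def]
    have : 0 < 2*u/m := by positivity
    linarith [div_nonneg (by norm_num : (0:ℝ) ≤ 2) (le_of_lt hm0)]
  have hy0 : (0:ℝ) < y := lt_of_lt_of_le one_pos hy1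
  have hprod : y * (2*x0 - y) = 1 := by
    have h1 : y * (2*x0 - y) = x0^2 - (2*u/m)^2 := by rw [hy_def]; ring
    have h2 : (2*u/m)^2 = 4*(m+1)/m^2 := by
      rw [div_pow, mul_pow]
      rw [hsqm]
      norm_num
    rw [h1, h2, hx0_def]
    field_simp
    ring
  have hyinv : y⁻¹ = 2*x0 - y := inv_eq_of_mul_eq_one_right hprod
  have hx0y : x0 = (y + y⁻¹)/2 := by rw [hyinv]; ring
  have hTval : (Polynomial.Chebyshev.T ℝ (d:ℤ)).eval x0 = (y^d + y⁻¹^d)/2 := by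
    rw [hx0y]
    exact (cheb_eval_pair y hy0 d).1
  have hyinv_le : y⁻¹^d ≤ y^d := by
    have h1 : y⁻¹ ≤ 1 := inv_le_one_of_one_le₀ hy1
    have h2 : (0:ℝ) ≤ y⁻¹ := inv_nonneg.mpr (le_of_lt hy0)
    calc y⁻¹^d ≤ 1 := pow_le_one₀ h2 h1
      _ ≤ y^d := one_le_pow₀ hy1
  have hTval_le : (Polynomial.Chebyshev.T ℝ (d:ℤ)).eval x0 ≤ y^d := by
    rw [hTval]; linarith
  have hTval_pos : 0 < (Polynomial.Chebyshev.T ℝ (d:ℤ)).eval x0 := by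
    rw [hTval]
    have : (0:ℝ) < y^d := pow_pos hy0 d
    have h2 : (0:ℝ) ≤ y⁻¹^d := pow_nonneg (inv_nonneg.mpr (le_of_lt hy0)) d
    linarith
  have hy_exp : y ≤ Real.exp (4*u/m) := by
    have h1 : y ≤ 1 + 4*u/m := by
      rw [hy_def, hx0_def]
      have h2 : 2/m + 2*u/m ≤ 4*u/m := by
        rw [← add_div, div_le_div_iff₀ hm0 hm0]
        nlinarith
      linarith
    calc y ≤ 1 + 4*u/m := h1
      _ ≤ Real.exp (4*u/m) := by linarith [Real.add_one_le_exp (4*u/m)]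
  have hyd_exp : y^d ≤ Real.exp (4*d*u/m) := by
    calc y^d ≤ Real.exp (4*u/m)^d := pow_le_pow_left₀ (le_of_lt hy0) hy_exp d
      _ = Real.exp ((d:ℝ) * (4*u/m)) := (Real.exp_nat_mul _ d).symm
      _ = Real.exp (4*d*u/m) := by ring_nf
  -- put everything together
  set B : ℝ := a * Real.exp (b * d^2 / m + 4*d*u/m) with hB_def
  have hBpos : 0 < B := by positivity
  have hlt : ε⁻¹ < B := by
    calc ε⁻¹ = q.eval (-1) := hqneg1.symm
      _ < A * (Polynomial.Chebyshev.T ℝ (d:ℤ)).eval x0 := hkey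
      _ ≤ A * y^d := by
          apply mul_le_mul_of_nonneg_left hTval_le (le_of_lt hApos)
      _ ≤ A * Real.exp (4*d*u/m) := by
          apply mul_le_mul_of_nonneg_left hyd_exp (le_of_lt hApos)
      _ = B := by rw [hA_def, hB_def, Real.exp_add]; ring
  have hfin : B⁻¹ < ε := inv_lt_of_inv_lt₀ hε hlt
  have hrhs : (1 / a) * Real.exp (-(b * d ^ 2 / m) - 4 * d * u / m) = B⁻¹ := by
    rw [hB_def, mul_inv, ← Real.exp_neg]
    congr 1
    · rw [one_div]
    · congr 1
      ring
  rw [ge_iff_le, hrhs]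
  exact le_of_lt hfin
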